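/- For the sum_digits cost function with partial cost ∂cost_S(B) = cost_S(B) − Σ msd(S_{(B)}) and heuristic h_S(B) = |{x ∈ S : x ≥ ∏B}|, the heuristic is admissible: for any bases B' ≻ B (B' extending B), cost_S(B') ≥ ∂cost_S(B') + h_S(B') ≥ ∂cost_S(B) + h_S(B). -/
import Mathlib


/-- The weight of digit position `i` in mixed radix base `B`: product of the first `i` radices. -/
def weight (B : List ℕ) (i : ℕ) : ℕ := (B.take i).prod

/-- The `i`-th digit of `v` in mixed radix base `B` (the most significant digit, at
position `B.length`, is `v / B.prod` and is unbounded). -/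
def digit (B : List ℕ) (v i : ℕ) : ℕ :=
  if i < B.length then (v / weight B i) % B.getD i 1 else v / B.prod

/-- The sum of the digits of `v` in base `B`. -/
def digitSum (B : List ℕ) (v : ℕ) : ℕ :=
  ∑ i ∈ Finset.range (B.length + 1), digit B v i

/-- The sum of digits of all elements of the multiset `S` in base `B`. -/
def sumDigits (S : Multiset ℕ) (B : List ℕ) : ℕ :=
  (S.map (digitSum B)).sum

/-- The sum of most significant digits of the elements of `S` in base `B`. -/
def msdSum (S : Multiset ℕ) (B : List ℕ) : ℕ := (S.map (fun v => v / B.prod)).sum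

/-- Partial cost for the `sum_digits` cost function: `cost_S(B) - Σ msd(S_(B))`. -/
def partialCost (S : Multiset ℕ) (B : List ℕ) : ℕ := sumDigits S B - msdSum S B

/-- Heuristic `h_S(B) = |{x ∈ S : x ≥ ∏B}|`. -/
def heur (S : Multiset ℕ) (B : List ℕ) : ℕ := (S.filter (fun x => B.prod ≤ x)).card

def lowSum (B : List ℕ) (v : ℕ) : ℕ := ∑ i ∈ Finset.range B.length, digit B v i

lemma digitSum_eq (B : List ℕ) (v : ℕ) : digitSum B v = lowSum B v + v / B.prod := by
  unfold digitSum lowSum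
  rw [Finset.sum_range_succ, digit, if_neg (lt_irrefl _)]

lemma sumDigits_eq (S : Multiset ℕ) (B : List ℕ) :
    sumDigits S B = (S.map (lowSum B)).sum + msdSum S B := by
  unfold sumDigits msdSum
  rw [← Multiset.sum_map_add]
  exact congrArg _ (Multiset.map_congr rfl fun v _ => digitSum_eq B v)

lemma partialCost_eq (S : Multiset ℕ) (B : List ℕ) :
    partialCost S B = (S.map (lowSum B)).sum := by
  unfold partialCost; rw [sumDigits_eq]; omega

lemma heur_eq (S : Multiset ℕ) (B : List ℕ) :
    heur S B = (S.map (fun v => if B.prod ≤ v then 1 else 0)).sum := by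
  unfold heur
  induction S using Multiset.induction with
  | empty => simp
  | cons a s ih => by_cases h : B.prod ≤ a <;> simp [h, ih] <;> omega

lemma digit_append (B : List ℕ) (b v i : ℕ) (hi : i < B.length) :
    digit (B ++ [b]) v i = digit B v i := by
  unfold digit weight
  rw [if_pos hi, if_pos (by simp; omega), List.take_append_of_le_length hi.le,
    List.getD_append _ _ _ _ hi]

lemma lowSum_append (B : List ℕ) (b v : ℕ) :
    lowSum (B ++ [b]) v = lowSum B v + (v / B.prod) % b := by
  unfold lowSum
  rw [List.length_append, List.length_singleton, Finset.sum_range_succ]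
  congr 1
  · exact Finset.sum_congr rfl fun i hi =>
      digit_append B b v i (Finset.mem_range.mp hi)
  · unfold digit weight
    rw [if_pos (by simp), List.take_append_of_le_length le_rfl, List.take_length,
      List.getD_eq_getElem?_getD]
    simp

lemma g_step (B : List ℕ) (b v : ℕ) (hB : 0 < B.prod) :
    lowSum B v + (if B.prod ≤ v then 1 else 0) ≤
    lowSum (B ++ [b]) v + (if (B ++ [b]).prod ≤ v then 1 else 0) := by
  rw [lowSum_append]
  by_cases h1 : B.prod ≤ v
  · by_cases h2 : (B ++ [b]).prod ≤ v
    · rw [if_pos h1, if_pos h2]; omega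
    · rw [if_pos h1, if_neg h2]
      have hq : 1 ≤ v / B.prod := (Nat.one_le_div_iff hB).mpr h1
      rcases Nat.eq_zero_or_pos ((v / B.prod) % b) with h0 | hpos
      · exfalso
        have hdvd : b ∣ v / B.prod := Nat.dvd_of_mod_eq_zero h0
        have hble : b ≤ v / B.prod := Nat.le_of_dvd (by omega) hdvd
        have : b * B.prod ≤ v := (Nat.le_div_iff_mul_le hB).mp hble
        apply h2
        rw [List.prod_append, List.prod_singleton, Nat.mul_comm]
        exact this
      · omega
  · simp [h1]; omega

lemma g_mono (B L : List ℕ) (v : ℕ) (h : ∀ x ∈ B ++ L, 1 ≤ x) :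
    lowSum B v + (if B.prod ≤ v then 1 else 0) ≤
    lowSum (B ++ L) v + (if (B ++ L).prod ≤ v then 1 else 0) := by
  induction L using List.reverseRecOn with
  | nil => simp
  | append_singleton l a ih =>
    rw [← List.append_assoc]
    refine le_trans (ih fun x hx => h x (by simp at hx ⊢; tauto)) ?_
    apply g_step
    apply List.prod_pos
    intro x hx
    exact h x (by simp at hx ⊢; tauto)

theorem stmt14 (S : Multiset ℕ) (B B' : List ℕ) (hB' : ∀ x ∈ B', 2 ≤ x)
    (hpre : B <+: B') (hne : B ≠ B') :
    partialCost S B' + heur S B' ≤ sumDigits S B' ∧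
    partialCost S B + heur S B ≤ partialCost S B' + heur S B' := by
  have hprodpos : 0 < B'.prod := List.prod_pos fun x hx => by have := hB' x hx; omega
  constructor
  · rw [partialCost_eq, heur_eq, sumDigits_eq]
    refine Nat.add_le_add_left ?_ _
    unfold msdSum
    refine Multiset.sum_map_le_sum_map _ _ fun v _ => ?_
    by_cases h : B'.prod ≤ v
    · simp only [if_pos h]
      exact (Nat.one_le_div_iff hprodpos).mpr h
    · simp [h]
  · obtain ⟨L, rfl⟩ := hpre
    rw [partialCost_eq, heur_eq, partialCost_eq, heur_eq,
      ← Multiset.sum_map_add, ← Multiset.sum_map_add]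
    refine Multiset.sum_map_le_sum_map _ _ fun v _ => ?_
    exact g_mono B L v fun x hx => by have := hB' x hx; omega
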